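/- Fix a real conductivity exponent m > 3 and B > 0, and set b(ζ) = B·ζ^{m/(m−2)}. For every σ ∈ ℝ there exists exactly one function v : [0,∞) → ℝ that is continuously differentiable on [0,∞), twice continuously differentiable on (0,∞), satisfies −ζ·v''(ζ) − v'(ζ)/(m−2) + b(ζ)·v(ζ) = σ·v(ζ) for all ζ > 0, and is normalized by v(0) = 1. Moreover this solution satisfies v'(0) = −(m−2)·σ. -/

import Mathlib

open Filter Set MeasureTheory intervalIntegral Real Topology

namespace S6

noncomputable def prim (β : ℝ) (h : ℝ → ℝ) : ℝ → ℝ :=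
  fun ζ => ∫ t in (0:ℝ)..(max ζ 0), t ^ β * h t

variable {β ζ : ℝ} {h : ℝ → ℝ}

lemma contOn_rpow : ContinuousOn (fun t : ℝ => t ^ β) (Ioi 0) := fun t ht =>
  (Real.continuousAt_rpow_const t β (Or.inl (ne_of_gt ht))).continuousWithinAt

lemma primII (hβ : -1 < β) (hh : Continuous h) (hζ : 0 ≤ ζ) :
    IntervalIntegrable (fun t => t ^ β * h t) volume 0 ζ := by
  obtain ⟨C, hC⟩ := (isCompact_Icc (a := (0:ℝ)) (b := ζ)).exists_bound_of_continuousOn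
    hh.continuousOn
  rw [intervalIntegrable_iff_integrableOn_Ioc_of_le hζ]
  have hg : IntegrableOn (fun t : ℝ => C * t ^ β) (Ioc 0 ζ) volume := by
    have := (intervalIntegrable_rpow' (a := 0) (b := ζ) hβ).const_mul C
    rwa [intervalIntegrable_iff_integrableOn_Ioc_of_le hζ] at this
  refine hg.integrable.mono' ?_ ?_
  · refine ContinuousOn.aestronglyMeasurable ?_ measurableSet_Ioc
    exact ((contOn_rpow.mono Ioc_subset_Ioi_self).mul hh.continuousOn)
  · filter_upwards [ae_restrict_mem measurableSet_Ioc] with t ht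
    have ht0 : (0:ℝ) < t := ht.1
    have hb : ‖h t‖ ≤ C := hC t ⟨ht0.le, ht.2⟩
    have h1 : ‖t ^ β * h t‖ = t ^ β * ‖h t‖ := by
      rw [norm_mul, Real.norm_rpow_of_nonneg ht0.le, Real.norm_of_nonneg ht0.le]
    rw [h1, mul_comm C]
    exact mul_le_mul_of_nonneg_left hb (Real.rpow_nonneg ht0.le β)

lemma prim_nonpos (hζ : ζ ≤ 0) : prim β h ζ = 0 := by
  simp [prim, max_eq_right hζ]

lemma prim_eq (hζ : 0 ≤ ζ) : prim β h ζ = ∫ t in (0:ℝ)..ζ, t ^ β * h t := by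
  rw [prim, max_eq_left hζ]

lemma prim_contOn (hβ : -1 < β) (hh : Continuous h) (T : ℝ) (hT : 0 ≤ T) :
    ContinuousOn (prim β h) (Icc 0 T) := by
  have h1 : ContinuousOn (fun x => ∫ t in (0:ℝ)..x, t ^ β * h t) (uIcc 0 T) :=
    continuousOn_primitive_interval' (primII hβ hh hT) left_mem_uIcc
  rw [uIcc_of_le hT] at h1
  exact h1.congr fun x hx => prim_eq hx.1

lemma continuous_of_Icc {f : ℝ → ℝ} (h0 : ∀ x ≤ 0, f x = f 0)
    (hf : ∀ T, 0 ≤ T → ContinuousOn f (Icc 0 T)) : Continuous f := by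
  rw [continuous_iff_continuousAt]
  intro x
  rcases lt_or_ge x 0 with hx | hx
  · have : f =ᶠ[𝓝 x] fun _ => f 0 := by
      filter_upwards [Iio_mem_nhds hx] with y hy
      exact h0 y hy.le
    exact (continuousAt_congr this).2 continuousAt_const
  · have hfg : f = f ∘ (fun y => max y 0) := by
      funext y
      rcases le_or_gt y 0 with hy | hy
      · simp only [Function.comp_apply, max_eq_right hy, h0 y hy, h0 0 le_rfl]
      · simp [Function.comp_apply, max_eq_left hy.le]
    rw [hfg]
    have hmem : x ∈ Icc (0:ℝ) (x + 1) := ⟨hx, by linarith⟩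
    have hcw : ContinuousWithinAt f (Icc 0 (x + 1)) x := hf (x + 1) (by linarith) x hmem
    have hg : Tendsto (fun y : ℝ => max y 0) (𝓝 x) (𝓝[Icc 0 (x + 1)] x) := by
      rw [tendsto_nhdsWithin_iff]
      constructor
      · have : Continuous (fun y : ℝ => max y 0) := continuous_id.max continuous_const
        have h2 := this.continuousAt (x := x)
        rw [ContinuousAt] at h2
        simpa [max_eq_left hx] using h2
      · filter_upwards [Iio_mem_nhds (show x < x + 1 by linarith)] with y hy
        exact ⟨le_max_right _ _, max_le hy.le (by linarith)⟩
    have := hcw.tendsto.comp hg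
    simpa [ContinuousAt, Function.comp, max_eq_left hx] using this

lemma prim_continuous (hβ : -1 < β) (hh : Continuous h) : Continuous (prim β h) := by
  refine continuous_of_Icc ?_ (fun T hT => prim_contOn hβ hh T hT)
  intro x hx
  rw [prim_nonpos hx, prim_nonpos le_rfl]

lemma prim_hasDerivAt (hβ : -1 < β) (hh : Continuous h) (hζ : 0 < ζ) :
    HasDerivAt (prim β h) (ζ ^ β * h ζ) ζ := by
  have hint := primII hβ hh hζ.le
  have hmeas : StronglyMeasurableAtFilter (fun t : ℝ => t ^ β * h t) (𝓝 ζ) volume := by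
    refine AEStronglyMeasurable.stronglyMeasurableAtFilter_of_mem ?_ (Ioi_mem_nhds hζ)
    exact ((contOn_rpow.mul hh.continuousOn).aestronglyMeasurable measurableSet_Ioi)
  have hca : ContinuousAt (fun t : ℝ => t ^ β * h t) ζ :=
    ((Real.continuousAt_rpow_const ζ β (Or.inl (ne_of_gt hζ)))).mul hh.continuousAt
  have H := integral_hasDerivAt_right hint hmeas hca
  refine H.congr_of_eventuallyEq ?_
  filter_upwards [Ioi_mem_nhds hζ] with y hy
  exact prim_eq (le_of_lt hy)

lemma integral_rpow_zero_left (hβ : -1 < β) (hζ : 0 ≤ ζ) :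
    ∫ t in (0:ℝ)..ζ, t ^ β = ζ ^ (β + 1) / (β + 1) := by
  rw [integral_rpow (Or.inl hβ)]
  rw [Real.zero_rpow (by linarith : β + 1 ≠ 0)]
  ring

lemma prim_bound (hβ : -1 < β) (hh : Continuous h) (hζ : 0 ≤ ζ) {γ C : ℝ}
    (hγ : 0 ≤ γ) (hC : 0 ≤ C) (hb : ∀ t ∈ Icc 0 ζ, |h t| ≤ C * t ^ γ) :
    |prim β h ζ| ≤ C * ζ ^ (β + γ + 1) / (β + γ + 1) := by
  rw [prim_eq hζ]
  have hβγ : (-1:ℝ) < β + γ := by linarith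
  have hbig : IntervalIntegrable (fun t : ℝ => C * t ^ (β + γ)) volume 0 ζ :=
    (intervalIntegrable_rpow' hβγ).const_mul C
  have hval : ∫ t in (0:ℝ)..ζ, C * t ^ (β + γ) = C * ζ ^ (β + γ + 1) / (β + γ + 1) := by
    rw [intervalIntegral.integral_const_mul, integral_rpow_zero_left hβγ hζ]; ring
  have key : ‖∫ t in (0:ℝ)..ζ, t ^ β * h t‖ ≤ |∫ t in (0:ℝ)..ζ, C * t ^ (β + γ)| := by
    refine intervalIntegral.norm_integral_le_abs_of_norm_le ?_ hbig
    rw [uIoc_of_le hζ]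
    filter_upwards [ae_restrict_mem measurableSet_Ioc] with t ht
    have ht0 : (0:ℝ) < t := ht.1
    have : ‖t ^ β * h t‖ = t ^ β * |h t| := by
      rw [norm_mul, Real.norm_rpow_of_nonneg ht0.le, Real.norm_of_nonneg ht0.le,
        Real.norm_eq_abs]
    rw [this, Real.rpow_add ht0]
    have hbt := hb t ⟨ht0.le, ht.2⟩
    nlinarith [Real.rpow_nonneg ht0.le β, Real.rpow_nonneg ht0.le γ, abs_nonneg (h t)]
  rw [Real.norm_eq_abs] at key
  have hnn : 0 ≤ C * ζ ^ (β + γ + 1) / (β + γ + 1) := by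
    apply div_nonneg (mul_nonneg hC (Real.rpow_nonneg hζ _)) (by linarith)
  calc |∫ t in (0:ℝ)..ζ, t ^ β * h t| ≤ |∫ t in (0:ℝ)..ζ, C * t ^ (β + γ)| := key
    _ = C * ζ ^ (β + γ + 1) / (β + γ + 1) := by rw [hval, abs_of_nonneg hnn]

lemma prim_sub {h1 h2 : ℝ → ℝ} (hβ : -1 < β) (h1c : Continuous h1) (h2c : Continuous h2)
    (ζ : ℝ) : prim β (fun t => h1 t - h2 t) ζ = prim β h1 ζ - prim β h2 ζ := by
  have hZ : 0 ≤ max ζ 0 := le_max_right _ _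
  unfold prim
  rw [← intervalIntegral.integral_sub (primII hβ h1c hZ) (primII hβ h2c hZ)]
  apply intervalIntegral.integral_congr
  intro t _
  ring

lemma prim_add {h1 h2 : ℝ → ℝ} (hβ : -1 < β) (h1c : Continuous h1) (h2c : Continuous h2)
    (ζ : ℝ) : prim β (fun t => h1 t + h2 t) ζ = prim β h1 ζ + prim β h2 ζ := by
  have hZ : 0 ≤ max ζ 0 := le_max_right _ _
  unfold prim
  rw [← intervalIntegral.integral_add (primII hβ h1c hZ) (primII hβ h2c hZ)]
  apply intervalIntegral.integral_congr
  intro t _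
  ring

section Op

variable (a : ℝ) (G : ℝ → ℝ)

noncomputable def FF (h : ℝ → ℝ) : ℝ → ℝ := prim (a - 1) (fun t => G t * h t)

noncomputable def TT (h : ℝ → ℝ) : ℝ → ℝ := prim (-a) (FF a G h)

variable {a G}
variable (ha0 : 0 < a) (ha1 : a < 1) (hG : Continuous G)

include ha0 hG in
lemma FF_cont {h : ℝ → ℝ} (hh : Continuous h) : Continuous (FF a G h) :=
  prim_continuous (by linarith) (hG.mul hh)

include ha0 ha1 hG in
lemma TT_cont {h : ℝ → ℝ} (hh : Continuous h) : Continuous (TT a G h) :=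
  prim_continuous (by linarith) (FF_cont ha0 hG hh)

include ha0 hG in
lemma FF_sub {h1 h2 : ℝ → ℝ} (h1c : Continuous h1) (h2c : Continuous h2) :
    FF a G (fun t => h1 t - h2 t) = fun ζ => FF a G h1 ζ - FF a G h2 ζ := by
  funext ζ
  unfold FF
  rw [← prim_sub (h1 := fun t => G t * h1 t) (h2 := fun t => G t * h2 t) (by linarith) (hG.mul h1c) (hG.mul h2c)]
  congr 1
  funext t
  ring

include ha0 ha1 hG in
lemma TT_sub {h1 h2 : ℝ → ℝ} (h1c : Continuous h1) (h2c : Continuous h2) (ζ : ℝ) :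
    TT a G (fun t => h1 t - h2 t) ζ = TT a G h1 ζ - TT a G h2 ζ := by
  unfold TT
  rw [FF_sub ha0 hG h1c h2c,
    prim_sub (by linarith) (FF_cont ha0 hG h1c) (FF_cont ha0 hG h2c)]

include ha0 hG in
lemma FF_add {h1 h2 : ℝ → ℝ} (h1c : Continuous h1) (h2c : Continuous h2) :
    FF a G (fun t => h1 t + h2 t) = fun ζ => FF a G h1 ζ + FF a G h2 ζ := by
  funext ζ
  unfold FF
  rw [← prim_add (h1 := fun t => G t * h1 t) (h2 := fun t => G t * h2 t) (by linarith) (hG.mul h1c) (hG.mul h2c)]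
  congr 1
  funext t
  ring

include ha0 ha1 hG in
lemma TT_add {h1 h2 : ℝ → ℝ} (h1c : Continuous h1) (h2c : Continuous h2) (ζ : ℝ) :
    TT a G (fun t => h1 t + h2 t) ζ = TT a G h1 ζ + TT a G h2 ζ := by
  unfold TT
  rw [FF_add ha0 hG h1c h2c,
    prim_add (by linarith) (FF_cont ha0 hG h1c) (FF_cont ha0 hG h2c)]

include ha0 hG in
lemma FF_bound {h : ℝ → ℝ} (hh : Continuous h) {Z c C γ : ℝ} (hZ : 0 ≤ Z)
    (hc : 0 ≤ c) (hGb : ∀ t ∈ Icc 0 Z, |G t| ≤ c) (hγ : 0 ≤ γ) (hC : 0 ≤ C)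
    (hb : ∀ t ∈ Icc 0 Z, |h t| ≤ C * t ^ γ) :
    ∀ s ∈ Icc 0 Z, |FF a G h s| ≤ (c * C / a) * s ^ (γ + a) := by
  intro s hs
  have h1 : |FF a G h s| ≤ (c * C) * s ^ ((a - 1) + γ + 1) / ((a - 1) + γ + 1) := by
    apply prim_bound (by linarith) (hG.mul hh) hs.1 hγ (mul_nonneg hc hC)
    intro t ht
    have htZ : t ∈ Icc 0 Z := ⟨ht.1, le_trans ht.2 hs.2⟩
    calc |G t * h t| = |G t| * |h t| := abs_mul _ _
      _ ≤ c * (C * t ^ γ) := by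
          apply mul_le_mul (hGb t htZ) (hb t htZ) (abs_nonneg _) hc
      _ = (c * C) * t ^ γ := by ring
  have he : (a - 1) + γ + 1 = γ + a := by ring
  rw [he] at h1
  refine h1.trans ?_
  rw [div_le_iff₀ (by linarith)]
  have hrp : 0 ≤ s ^ (γ + a) := Real.rpow_nonneg hs.1 _
  have key : c * C * s ^ (γ + a) = (c * C / a * s ^ (γ + a)) * a := by field_simp
  rw [key]
  exact mul_le_mul_of_nonneg_left (by linarith)
    (mul_nonneg (div_nonneg (mul_nonneg hc hC) ha0.le) hrp)

include ha0 ha1 hG in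
lemma TT_bound {h : ℝ → ℝ} (hh : Continuous h) {Z c C γ : ℝ} (hZ : 0 ≤ Z)
    (hc : 0 ≤ c) (hGb : ∀ t ∈ Icc 0 Z, |G t| ≤ c) (hγ : 0 ≤ γ) (hC : 0 ≤ C)
    (hb : ∀ t ∈ Icc 0 Z, |h t| ≤ C * t ^ γ) :
    ∀ ζ ∈ Icc 0 Z, |TT a G h ζ| ≤ (c * C / a) * ζ ^ (γ + 1) / (γ + 1) := by
  intro ζ hζ
  have h1 : |TT a G h ζ| ≤ (c * C / a) * ζ ^ ((-a) + (γ + a) + 1) / ((-a) + (γ + a) + 1) := by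
    apply prim_bound (by linarith) (FF_cont ha0 hG hh) hζ.1 (by linarith)
      (div_nonneg (mul_nonneg hc hC) ha0.le)
    intro s hsi
    exact FF_bound ha0 hG hh hZ hc hGb hγ hC hb s ⟨hsi.1, le_trans hsi.2 hζ.2⟩
  have he : (-a) + (γ + a) + 1 = γ + 1 := by ring
  rwa [he] at h1

variable (a G) in
noncomputable def uu : ℕ → ℝ → ℝ
  | 0 => fun _ => 1
  | n + 1 => TT a G (uu n)

include ha0 ha1 hG in
lemma uu_cont (n : ℕ) : Continuous (uu a G n) := by
  induction n with
  | zero => exact continuous_const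
  | succ n ih => exact TT_cont ha0 ha1 hG ih

lemma uu_nonpos {ζ : ℝ} (n : ℕ) (hζ : ζ ≤ 0) : uu a G (n + 1) ζ = 0 := by
  show TT a G (uu a G n) ζ = 0
  exact prim_nonpos hζ

lemma uu_zero_nonpos {ζ : ℝ} (hζ : ζ ≤ 0) : uu a G 0 ζ = 1 := rfl

include ha0 ha1 hG in
lemma uu_bound {Z c : ℝ} (hZ : 0 ≤ Z) (hc : 0 ≤ c) (hGb : ∀ t ∈ Icc 0 Z, |G t| ≤ c) :
    ∀ n, ∀ ζ ∈ Icc 0 Z, |uu a G n ζ| ≤ (c / a) ^ n / n.factorial * ζ ^ (n : ℝ) := by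
  intro n
  induction n with
  | zero =>
    intro ζ hζ
    simp [uu, Real.rpow_natCast]
  | succ n ih =>
    intro ζ hζ
    have hC : (0:ℝ) ≤ (c / a) ^ n / n.factorial :=
      div_nonneg (pow_nonneg (div_nonneg hc ha0.le) n) (Nat.cast_nonneg _)
    have h1 := TT_bound ha0 ha1 hG (uu_cont ha0 ha1 hG n) hZ hc hGb
      (Nat.cast_nonneg n : (0:ℝ) ≤ (n:ℝ)) hC ih ζ hζ
    have hfac : ((n + 1).factorial : ℝ) = ((n : ℝ) + 1) * (n.factorial : ℝ) := by
      rw [Nat.factorial_succ]; push_cast; ring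
    have hfacpos : (0:ℝ) < (n.factorial : ℝ) := by positivity
    have heq : c * ((c / a) ^ n / n.factorial) / a * ζ ^ ((n:ℝ) + 1) / ((n:ℝ) + 1)
        = (c / a) ^ (n + 1) / (n + 1).factorial * ζ ^ (((n + 1 : ℕ)):ℝ) := by
      rw [hfac]
      push_cast
      have hn1 : (0:ℝ) < (n:ℝ) + 1 := by positivity
      have ha' : a ≠ 0 := ha0.ne'
      field_simp
      ring_nf
      simp only [mul_assoc, mul_inv_cancel_left₀ ha']
    show |TT a G (uu a G n) ζ| ≤ _
    rw [← heq]
    exact h1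

include ha0 ha1 hG in
lemma uu_bound' {Z c : ℝ} (hZ : 0 ≤ Z) (hc : 0 ≤ c) (hGb : ∀ t ∈ Icc 0 Z, |G t| ≤ c) :
    ∀ n, ∀ ζ ∈ Icc 0 Z, |uu a G n ζ| ≤ (c / a * Z) ^ n / n.factorial := by
  intro n ζ hζ
  have h1 := uu_bound ha0 ha1 hG hZ hc hGb n ζ hζ
  refine h1.trans ?_
  rw [Real.rpow_natCast, mul_pow]
  have hp : ζ ^ n ≤ Z ^ n := pow_le_pow_left₀ hζ.1 hζ.2 n
  have hnn : (0:ℝ) ≤ (c / a) ^ n / n.factorial :=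
    div_nonneg (pow_nonneg (div_nonneg hc ha0.le) n) (Nat.cast_nonneg _)
  calc (c / a) ^ n / ↑n.factorial * ζ ^ n ≤ (c / a) ^ n / ↑n.factorial * Z ^ n :=
        mul_le_mul_of_nonneg_left hp hnn
    _ = (c / a) ^ n * Z ^ n / ↑n.factorial := by ring

variable (a G) in
noncomputable def vv : ℝ → ℝ := fun ζ => ∑' n, uu a G n ζ

lemma vv_nonpos {ζ : ℝ} (hζ : ζ ≤ 0) : vv a G ζ = 1 := by
  rw [vv, tsum_eq_single 0]
  · rfl
  · intro n hn
    obtain ⟨k, rfl⟩ := Nat.exists_eq_succ_of_ne_zero hn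
    exact uu_nonpos k hζ

include ha0 ha1 hG in
lemma uu_summable {ζ : ℝ} (hζ : 0 ≤ ζ) : Summable (fun n => uu a G n ζ) := by
  obtain ⟨c, hc⟩ := (isCompact_Icc (a := (0:ℝ)) (b := ζ)).exists_bound_of_continuousOn
    hG.continuousOn
  have hc0 : 0 ≤ c := le_trans (norm_nonneg _) (hc 0 ⟨le_rfl, hζ⟩)
  refine Summable.of_norm_bounded (Real.summable_pow_div_factorial (c / a * ζ)) ?_
  intro n
  exact uu_bound' ha0 ha1 hG hζ hc0 (fun t ht => hc t ht) n ζ ⟨hζ, le_rfl⟩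

include ha0 ha1 hG in
lemma vv_contOn {Z : ℝ} (hZ : 0 ≤ Z) : ContinuousOn (vv a G) (Icc 0 Z) := by
  obtain ⟨c, hc⟩ := (isCompact_Icc (a := (0:ℝ)) (b := Z)).exists_bound_of_continuousOn
    hG.continuousOn
  have hc0 : 0 ≤ c := le_trans (norm_nonneg _) (hc 0 ⟨le_rfl, hZ⟩)
  refine continuousOn_tsum (fun n => (uu_cont ha0 ha1 hG n).continuousOn)
    (Real.summable_pow_div_factorial (c / a * Z)) ?_
  intro n ζ hζ
  exact uu_bound' ha0 ha1 hG hZ hc0 (fun t ht => hc t ht) n ζ hζ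

include ha0 ha1 hG in
lemma vv_cont : Continuous (vv a G) := by
  refine continuous_of_Icc ?_ (fun T hT => vv_contOn ha0 ha1 hG hT)
  intro x hx
  rw [vv_nonpos hx, vv_nonpos le_rfl]

variable (a G) in
noncomputable def SS (N : ℕ) : ℝ → ℝ := fun ζ => ∑ n ∈ Finset.range N, uu a G n ζ

include ha0 ha1 hG in
lemma SS_cont (N : ℕ) : Continuous (SS a G N) :=
  continuous_finset_sum _ fun n _ => uu_cont ha0 ha1 hG n

include ha0 ha1 hG in
lemma TT_zero (ζ : ℝ) : TT a G (fun _ => 0) ζ = 0 := by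
  have h1 : FF a G (fun _ => (0:ℝ)) = fun _ => 0 := by
    funext s
    unfold FF prim
    simp
  unfold TT
  rw [h1]
  unfold prim
  simp

include ha0 ha1 hG in
lemma TT_SS (N : ℕ) (ζ : ℝ) : TT a G (SS a G N) ζ = SS a G (N + 1) ζ - 1 := by
  induction N with
  | zero =>
    have h0 : SS a G 0 = fun _ => (0:ℝ) := by funext x; simp [SS]
    rw [h0, TT_zero ha0 ha1 hG]
    simp [SS, uu]
  | succ N ih =>
    have hsplit : SS a G (N + 1) = fun t => SS a G N t + uu a G N t := by
      funext t
      simp [SS, Finset.sum_range_succ]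
    rw [hsplit, TT_add ha0 ha1 hG (SS_cont ha0 ha1 hG N) (uu_cont ha0 ha1 hG N), ih]
    have : TT a G (uu a G N) ζ = uu a G (N + 1) ζ := rfl
    rw [this]
    simp [SS, Finset.sum_range_succ]
    ring

include ha0 ha1 hG in
lemma vv_tail {Z c : ℝ} (hZ : 0 ≤ Z) (hc : 0 ≤ c) (hGb : ∀ t ∈ Icc 0 Z, |G t| ≤ c) (N : ℕ) :
    ∀ ζ ∈ Icc 0 Z, |vv a G ζ - SS a G N ζ| ≤ ∑' k, (c / a * Z) ^ (k + N) / (k + N).factorial := by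
  intro ζ hζ
  have hsum : Summable (fun n => uu a G n ζ) := uu_summable ha0 ha1 hG hζ.1
  have hb : Summable (fun n : ℕ => (c / a * Z) ^ n / n.factorial) :=
    Real.summable_pow_div_factorial _
  have hbt : Summable (fun k : ℕ => (c / a * Z) ^ (k + N) / (k + N).factorial) :=
    (summable_nat_add_iff N).2 hb
  have key : vv a G ζ - SS a G N ζ = ∑' k, uu a G (k + N) ζ := by
    have := Summable.sum_add_tsum_nat_add (f := fun n => uu a G n ζ) N hsum
    rw [vv, SS] at *
    linarith [this]
  rw [key]
  have habs : Summable (fun k : ℕ => ‖uu a G (k + N) ζ‖) := by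
    refine Summable.of_nonneg_of_le (fun k => norm_nonneg _) ?_ hbt
    intro k
    exact uu_bound' ha0 ha1 hG hZ hc hGb (k + N) ζ hζ
  calc |∑' k, uu a G (k + N) ζ| ≤ ∑' k, ‖uu a G (k + N) ζ‖ := by
        rw [← Real.norm_eq_abs]; exact norm_tsum_le_tsum_norm habs
    _ ≤ ∑' k, (c / a * Z) ^ (k + N) / (k + N).factorial := by
        refine Summable.tsum_le_tsum ?_ habs hbt
        intro k
        exact uu_bound' ha0 ha1 hG hZ hc hGb (k + N) ζ hζ

include ha0 ha1 hG in
lemma tail_tendsto {x : ℝ} :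
    Tendsto (fun N => ∑' k, x ^ (k + N) / (k + N).factorial) atTop (𝓝 0) := by
  have hb : Summable (fun n : ℕ => x ^ n / n.factorial) := Real.summable_pow_div_factorial _
  have key : ∀ N, ∑' k, x ^ (k + N) / (k + N).factorial
      = (∑' n, x ^ n / n.factorial) - ∑ n ∈ Finset.range N, x ^ n / n.factorial := by
    intro N
    have := Summable.sum_add_tsum_nat_add (f := fun n : ℕ => x ^ n / n.factorial) N hb
    linarith [this]
  simp_rw [key]
  have := hb.hasSum.tendsto_sum_nat
  have h2 : Tendsto (fun N => (∑' n, x ^ n / n.factorial)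
      - ∑ n ∈ Finset.range N, x ^ n / n.factorial) atTop
      (𝓝 ((∑' n, x ^ n / n.factorial) - (∑' n, x ^ n / n.factorial))) :=
    tendsto_const_nhds.sub this
  simpa using h2

include ha0 ha1 hG in
lemma vv_fixed (ζ : ℝ) : vv a G ζ = 1 + TT a G (vv a G) ζ := by
  rcases lt_or_ge ζ 0 with hζ | hζ
  · rw [vv_nonpos hζ.le]
    have : TT a G (vv a G) ζ = 0 := prim_nonpos hζ.le
    rw [this]; ring
  · obtain ⟨c, hc⟩ := (isCompact_Icc (a := (0:ℝ)) (b := ζ)).exists_bound_of_continuousOn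
      hG.continuousOn
    have hc0 : 0 ≤ c := le_trans (norm_nonneg _) (hc 0 ⟨le_rfl, hζ⟩)
    set E : ℕ → ℝ := fun N => ∑' k, (c / a * ζ) ^ (k + N) / (k + N).factorial with hE
    have hEnn : ∀ N, 0 ≤ E N := by
      intro N
      refine tsum_nonneg fun k => ?_
      have : 0 ≤ (c / a * ζ) := mul_nonneg (div_nonneg hc0 ha0.le) hζ
      positivity
    have hEbd : ∀ N, ∀ t ∈ Icc 0 ζ, |vv a G t - SS a G N t| ≤ E N * t ^ (0:ℝ) := by
      intro N t ht
      rw [Real.rpow_zero, mul_one]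
      exact vv_tail ha0 ha1 hG hζ hc0 (fun t ht => hc t ht) N t ht
    have hmain : ∀ N, |vv a G ζ - (1 + TT a G (vv a G) ζ)| ≤ E (N + 1) + c * E N / a * ζ := by
      intro N
      have hTsub := TT_sub ha0 ha1 hG (vv_cont ha0 ha1 hG) (SS_cont ha0 ha1 hG N) ζ
      have hTbd := TT_bound ha0 ha1 hG ((vv_cont ha0 ha1 hG).sub (SS_cont ha0 ha1 hG N))
        hζ hc0 (fun t ht => hc t ht) le_rfl (hEnn N) (hEbd N) ζ ⟨hζ, le_rfl⟩
      have hTSS := TT_SS ha0 ha1 hG N ζ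
      have htail := vv_tail ha0 ha1 hG hζ hc0 (fun t ht => hc t ht) (N + 1) ζ ⟨hζ, le_rfl⟩
      have hdecomp : vv a G ζ - (1 + TT a G (vv a G) ζ)
          = (vv a G ζ - SS a G (N + 1) ζ) - TT a G (fun t => vv a G t - SS a G N t) ζ := by
        rw [hTsub, hTSS]
        ring
      rw [hdecomp]
      have h2 : |TT a G (fun t => vv a G t - SS a G N t) ζ| ≤ c * E N / a * ζ := by
        refine hTbd.trans ?_
        norm_num
      calc |(vv a G ζ - SS a G (N + 1) ζ) - TT a G (fun t => vv a G t - SS a G N t) ζ|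
          ≤ |vv a G ζ - SS a G (N + 1) ζ| + |TT a G (fun t => vv a G t - SS a G N t) ζ| :=
            abs_sub _ _
        _ ≤ E (N + 1) + c * E N / a * ζ := add_le_add htail h2
    have hlim : Tendsto (fun N => E (N + 1) + c * E N / a * ζ) atTop (𝓝 0) := by
      have h1 : Tendsto E atTop (𝓝 0) := tail_tendsto ha0 ha1 hG
      have h2 : Tendsto (fun N => E (N + 1)) atTop (𝓝 0) := h1.comp (tendsto_add_atTop_nat 1)
      have h3 : Tendsto (fun N => c * E N / a * ζ) atTop (𝓝 (c * 0 / a * ζ)) := by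
        apply Tendsto.mul_const
        apply Tendsto.div_const
        exact tendsto_const_nhds.mul h1
      simp only [mul_zero, zero_div, zero_mul] at h3
      simpa using h2.add h3
    have : |vv a G ζ - (1 + TT a G (vv a G) ζ)| ≤ 0 :=
      le_of_tendsto_of_tendsto' tendsto_const_nhds hlim hmain
    have habs : |vv a G ζ - (1 + TT a G (vv a G) ζ)| = 0 := le_antisymm this (abs_nonneg _)
    have := abs_eq_zero.1 habs
    linarith

include ha0 ha1 hG in
lemma TT_fixed_zero {d : ℝ → ℝ} (hd : Continuous d) (hfix : ∀ ζ, d ζ = TT a G d ζ) :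
    ∀ ζ, 0 ≤ ζ → d ζ = 0 := by
  intro Z hZ
  obtain ⟨c, hc⟩ := (isCompact_Icc (a := (0:ℝ)) (b := Z)).exists_bound_of_continuousOn
    hG.continuousOn
  have hc0 : 0 ≤ c := le_trans (norm_nonneg _) (hc 0 ⟨le_rfl, hZ⟩)
  obtain ⟨M, hM⟩ := (isCompact_Icc (a := (0:ℝ)) (b := Z)).exists_bound_of_continuousOn
    hd.continuousOn
  have hM0 : 0 ≤ M := le_trans (norm_nonneg _) (hM 0 ⟨le_rfl, hZ⟩)
  have key : ∀ n : ℕ, ∀ t ∈ Icc 0 Z, |d t| ≤ M * (c / a) ^ n / n.factorial * t ^ (n : ℝ) := by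
    intro n
    induction n with
    | zero =>
      intro t ht
      simpa [Real.rpow_natCast] using hM t ht
    | succ n ih =>
      intro t ht
      have hC : (0:ℝ) ≤ M * (c / a) ^ n / n.factorial :=
        div_nonneg (mul_nonneg hM0 (pow_nonneg (div_nonneg hc0 ha0.le) n)) (Nat.cast_nonneg _)
      have h1 := TT_bound ha0 ha1 hG hd hZ hc0 (fun s hs => hc s hs)
        (Nat.cast_nonneg n : (0:ℝ) ≤ (n:ℝ)) hC ih t ht
      rw [← hfix t] at h1
      have hfac : ((n + 1).factorial : ℝ) = ((n : ℝ) + 1) * (n.factorial : ℝ) := by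
        rw [Nat.factorial_succ]; push_cast; ring
      have hfacpos : (0:ℝ) < (n.factorial : ℝ) := by positivity
      have heq : c * (M * (c / a) ^ n / n.factorial) / a * t ^ ((n:ℝ) + 1) / ((n:ℝ) + 1)
          = M * (c / a) ^ (n + 1) / (n + 1).factorial * t ^ (((n + 1 : ℕ)):ℝ) := by
        rw [hfac]
        push_cast
        have hn1 : (0:ℝ) < (n:ℝ) + 1 := by positivity
        have ha' : a ≠ 0 := ha0.ne'
        field_simp
        ring_nf
        simp only [mul_assoc, mul_inv_cancel_left₀ ha']
      rw [← heq]
      exact h1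
  have hlim : Tendsto (fun n : ℕ => M * (c / a * Z) ^ n / n.factorial) atTop (𝓝 0) := by
    have h1 : Tendsto (fun n : ℕ => (c / a * Z) ^ n / n.factorial) atTop (𝓝 0) :=
      (Real.summable_pow_div_factorial _).tendsto_atTop_zero
    have h2 := h1.const_mul M
    simpa [mul_div_assoc] using h2
  have hbd : ∀ n : ℕ, |d Z| ≤ M * (c / a * Z) ^ n / n.factorial := by
    intro n
    have h1 := key n Z ⟨hZ, le_rfl⟩
    refine h1.trans (le_of_eq ?_)
    rw [Real.rpow_natCast, mul_pow]
    ring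
  have : |d Z| ≤ 0 := le_of_tendsto_of_tendsto' tendsto_const_nhds hlim hbd
  exact abs_eq_zero.1 (le_antisymm this (abs_nonneg _))

section Reg

variable (a G) in
noncomputable def psi (V : ℝ → ℝ) : ℝ → ℝ := fun s => s ^ (-a) * FF a G V s

variable (a G) in
noncomputable def psi' (V : ℝ → ℝ) : ℝ → ℝ := fun ζ =>
  (-a * ζ ^ (-a - 1)) * FF a G V ζ + ζ ^ (-a) * (ζ ^ (a - 1) * (G ζ * V ζ))

variable {V : ℝ → ℝ} (hV : Continuous V) (hfix : ∀ ζ, V ζ = 1 + TT a G V ζ)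

include ha0 ha1 hG hV hfix in
lemma V_hasDerivAt {ζ : ℝ} (hζ : 0 < ζ) : HasDerivAt V (psi a G V ζ) ζ := by
  have h := (prim_hasDerivAt (β := -a) (by linarith) (FF_cont ha0 hG hV) hζ).const_add 1
  exact h.congr_of_eventuallyEq (Eventually.of_forall fun x => hfix x)

include ha0 hG hV in
lemma FV_hasDerivAt {ζ : ℝ} (hζ : 0 < ζ) :
    HasDerivAt (FF a G V) (ζ ^ (a - 1) * (G ζ * V ζ)) ζ :=
  prim_hasDerivAt (by linarith) (hG.mul hV) hζ

include ha0 hG hV in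
lemma psi_hasDerivAt {ζ : ℝ} (hζ : 0 < ζ) : HasDerivAt (psi a G V) (psi' a G V ζ) ζ := by
  have h1 : HasDerivAt (fun x : ℝ => x ^ (-a)) (-a * ζ ^ (-a - 1)) ζ :=
    Real.hasDerivAt_rpow_const (Or.inl hζ.ne')
  exact h1.mul (FV_hasDerivAt ha0 hG hV hζ)

include ha0 ha1 hG hV in
lemma psi_tendsto :
    Tendsto (psi a G V) (𝓝[>] 0) (𝓝 (G 0 * V 0 / a)) := by
  set q : ℝ → ℝ := fun t => G t * V t with hq
  have hqc : Continuous q := hG.mul hV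
  rw [Metric.tendsto_nhdsWithin_nhds]
  intro ε hε
  have hεa : 0 < a * ε / 2 := by positivity
  obtain ⟨δ, hδ0, hδ⟩ := Metric.continuousAt_iff.1 hqc.continuousAt (a * ε / 2) hεa
  refine ⟨δ, hδ0, ?_⟩
  intro s hs hsd
  rw [Real.dist_eq] at hsd ⊢
  have hs0 : 0 < s := hs
  have hsδ : s < δ := by
    rw [sub_zero] at hsd
    exact lt_of_abs_lt hsd
  -- prim of the constant q 0
  have hconst : prim (a - 1) (fun _ => q 0) s = q 0 * s ^ a / a := by
    rw [prim_eq hs0.le]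
    rw [show (fun t : ℝ => t ^ (a - 1) * q 0) = fun t : ℝ => q 0 * t ^ (a - 1) from
      funext fun t => mul_comm _ _]
    rw [intervalIntegral.integral_const_mul, integral_rpow_zero_left (by linarith) hs0.le]
    rw [show a - 1 + 1 = a from by ring]
    ring
  have hsplit : FF a G V s - q 0 * s ^ a / a = prim (a - 1) (fun t => q t - q 0) s := by
    rw [prim_sub (by linarith) hqc continuous_const, ← hconst]
    rfl
  have hbd : |prim (a - 1) (fun t => q t - q 0) s| ≤ (a * ε / 2) * s ^ a / a := by
    have h1 : |prim (a - 1) (fun t => q t - q 0) s|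
        ≤ (a * ε / 2) * s ^ ((a - 1) + 0 + 1) / ((a - 1) + 0 + 1) := by
      apply prim_bound (by linarith) (hqc.sub continuous_const) hs0.le le_rfl hεa.le
      intro t ht
      rw [Real.rpow_zero, mul_one]
      have : dist t 0 < δ := by
        rw [Real.dist_eq, sub_zero, abs_of_nonneg ht.1]
        exact lt_of_le_of_lt ht.2 hsδ
      exact (hδ this).le
    rwa [show (a - 1) + 0 + 1 = a from by ring] at h1
  have hpow : s ^ (-a) * s ^ a = 1 := by
    rw [← Real.rpow_add hs0]
    simp
  have hpsi : psi a G V s - q 0 / a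
      = s ^ (-a) * (FF a G V s - q 0 * s ^ a / a) := by
    rw [mul_sub]
    unfold psi
    have h2 : s ^ (-a) * (q 0 * s ^ a / a) = (s ^ (-a) * s ^ a) * q 0 / a := by ring
    rw [h2, hpow, one_mul]
  have hfin : |psi a G V s - q 0 / a| ≤ ε / 2 := by
    rw [hpsi, hsplit, abs_mul, abs_of_nonneg (Real.rpow_nonneg hs0.le _)]
    calc s ^ (-a) * |prim (a - 1) (fun t => q t - q 0) s|
        ≤ s ^ (-a) * ((a * ε / 2) * s ^ a / a) :=
          mul_le_mul_of_nonneg_left hbd (Real.rpow_nonneg hs0.le _)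
      _ = (s ^ (-a) * s ^ a) * (ε / 2) := by field_simp
      _ = ε / 2 := by rw [hpow]; ring
  calc |psi a G V s - q 0 / a| ≤ ε / 2 := hfin
    _ < ε := by linarith

include ha0 ha1 hG hV hfix in
lemma V_hasDerivWithinAt_zero : HasDerivWithinAt V (G 0 * V 0 / a) (Ici 0) 0 := by
  refine hasDerivWithinAt_Ici_of_tendsto_deriv (s := Ioi 0) ?_ ?_ self_mem_nhdsWithin ?_
  · intro x hx
    exact (V_hasDerivAt ha0 ha1 hG hV hfix hx).differentiableAt.differentiableWithinAt
  · exact hV.continuousWithinAt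
  · have heq : ∀ᶠ x in 𝓝[>] (0:ℝ), psi a G V x = deriv V x := by
      filter_upwards [self_mem_nhdsWithin] with x hx
      exact ((V_hasDerivAt ha0 ha1 hG hV hfix hx).deriv).symm
    exact (psi_tendsto ha0 ha1 hG hV).congr' heq

variable (a G V) in
noncomputable def PSI : ℝ → ℝ := fun ζ =>
  if ζ ≤ 0 then G 0 * V 0 / a else psi a G V ζ

include ha0 ha1 hG hV hfix in
lemma V_derivWithin_eqOn : EqOn (derivWithin V (Ici 0)) (PSI a G V) (Ici 0) := by
  intro x hx
  rcases eq_or_lt_of_le (mem_Ici.mp hx) with h0 | hpos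
  · subst h0
    rw [(V_hasDerivWithinAt_zero ha0 ha1 hG hV hfix).derivWithin
      (uniqueDiffOn_Ici 0 0 self_mem_Ici)]
    simp [PSI]
  · rw [derivWithin_of_mem_nhds (Ici_mem_nhds hpos),
      (V_hasDerivAt ha0 ha1 hG hV hfix hpos).deriv]
    simp only [PSI, if_neg (not_le.2 hpos)]

include ha0 ha1 hG hV in
lemma psi_contAt {ζ : ℝ} (hζ : 0 < ζ) : ContinuousAt (psi a G V) ζ :=
  (Real.continuousAt_rpow_const ζ (-a) (Or.inl hζ.ne')).mul
    (FF_cont ha0 hG hV).continuousAt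

include ha0 ha1 hG hV hfix in
lemma PSI_contOn : ContinuousOn (PSI a G V) (Ici 0) := by
  intro x hx
  rcases eq_or_lt_of_le (mem_Ici.mp hx) with h0 | hpos
  · subst h0
    rw [← Ioi_insert]
    rw [continuousWithinAt_insert_self]
    have hP0 : PSI a G V 0 = G 0 * V 0 / a := by simp [PSI]
    rw [ContinuousWithinAt, hP0]
    have heq : ∀ᶠ x in 𝓝[>] (0:ℝ), psi a G V x = PSI a G V x := by
      filter_upwards [self_mem_nhdsWithin] with x hx
      simp only [PSI, if_neg (not_le.2 (mem_Ioi.mp hx))]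
    exact (psi_tendsto ha0 ha1 hG hV).congr' heq
  · have heq : PSI a G V =ᶠ[𝓝 x] psi a G V := by
      filter_upwards [Ioi_mem_nhds hpos] with y hy
      simp only [PSI, if_neg (not_le.2 (mem_Ioi.mp hy))]
    exact ((psi_contAt ha0 ha1 hG hV hpos).congr heq.symm).continuousWithinAt

include ha0 ha1 hG hV hfix in
lemma V_contDiffOn_one : ContDiffOn ℝ 1 V (Ici 0) := by
  rw [show (1 : WithTop ℕ∞) = 0 + 1 by norm_num,
    contDiffOn_succ_iff_derivWithin (uniqueDiffOn_Ici 0)]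
  refine ⟨?_, by simp, ?_⟩
  · intro x hx
    rcases eq_or_lt_of_le (mem_Ici.mp hx) with h0 | hpos
    · subst h0
      exact (V_hasDerivWithinAt_zero ha0 ha1 hG hV hfix).differentiableWithinAt
    · exact (V_hasDerivAt ha0 ha1 hG hV hfix hpos).differentiableAt.differentiableWithinAt
  · rw [contDiffOn_zero]
    exact (PSI_contOn ha0 ha1 hG hV hfix).congr (V_derivWithin_eqOn ha0 ha1 hG hV hfix)

include ha0 ha1 hG hV in
lemma psi'_contOn : ContinuousOn (psi' a G V) (Ioi 0) := by
  unfold psi'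
  apply ContinuousOn.add
  · exact (continuousOn_const.mul contOn_rpow).mul (FF_cont ha0 hG hV).continuousOn
  · exact contOn_rpow.mul (contOn_rpow.mul (hG.continuousOn.mul hV.continuousOn))

include ha0 ha1 hG hV hfix in
lemma V_deriv_eq {ζ : ℝ} (hζ : 0 < ζ) : deriv V ζ = psi a G V ζ :=
  (V_hasDerivAt ha0 ha1 hG hV hfix hζ).deriv

include ha0 ha1 hG hV hfix in
lemma V_deriv2_eq {ζ : ℝ} (hζ : 0 < ζ) : deriv (deriv V) ζ = psi' a G V ζ := by
  have heq : deriv V =ᶠ[𝓝 ζ] psi a G V := by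
    filter_upwards [Ioi_mem_nhds hζ] with y hy
    exact V_deriv_eq ha0 ha1 hG hV hfix hy
  rw [heq.deriv_eq]
  exact (psi_hasDerivAt ha0 hG hV hζ).deriv

include ha0 ha1 hG hV hfix in
lemma V_contDiffOn_two : ContDiffOn ℝ 2 V (Ioi 0) := by
  rw [show (2 : WithTop ℕ∞) = 1 + 1 by norm_num,
    contDiffOn_succ_iff_deriv_of_isOpen isOpen_Ioi]
  refine ⟨fun x hx => (V_hasDerivAt ha0 ha1 hG hV hfix hx).differentiableAt.differentiableWithinAt,
    by simp, ?_⟩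
  have hψ : ContDiffOn ℝ 1 (psi a G V) (Ioi 0) := by
    rw [show (1 : WithTop ℕ∞) = 0 + 1 by norm_num,
      contDiffOn_succ_iff_deriv_of_isOpen isOpen_Ioi]
    refine ⟨fun x hx => (psi_hasDerivAt ha0 hG hV hx).differentiableAt.differentiableWithinAt,
      by simp, ?_⟩
    rw [contDiffOn_zero]
    refine (psi'_contOn ha0 ha1 hG hV).congr ?_
    intro x hx
    exact (psi_hasDerivAt ha0 hG hV hx).deriv
  exact hψ.congr fun x hx => V_deriv_eq ha0 ha1 hG hV hfix hx

end Reg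

section Conv

variable {v : ℝ → ℝ}

include ha0 ha1 hG in
lemma regsol_fixed (h1 : ContDiffOn ℝ 1 v (Ici 0)) (h2 : ContDiffOn ℝ 2 v (Ioi 0))
    (hode : ∀ ζ : ℝ, 0 < ζ → ζ * deriv (deriv v) ζ + a * deriv v ζ = G ζ * v ζ)
    (hv0 : v 0 = 1) :
    Continuous (fun x => v (max x 0)) ∧
    (∀ ζ : ℝ, v (max ζ 0) = 1 + TT a G (fun x => v (max x 0)) ζ) ∧
    (∀ ζ : ℝ, 0 < ζ → deriv v ζ = psi a G (fun x => v (max x 0)) ζ) := by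
  set V : ℝ → ℝ := fun x => v (max x 0) with hVdef
  have hmax : Continuous (fun x : ℝ => max x 0) := continuous_id.max continuous_const
  have hVc : Continuous V :=
    h1.continuousOn.comp_continuous hmax fun x => mem_Ici.mpr (le_max_right _ _)
  have hVeq : ∀ ζ : ℝ, 0 ≤ ζ → V ζ = v ζ := fun ζ hζ => by
    simp only [hVdef, max_eq_left hζ]
  --差 derivatives of v on Ioi 0
  have hdiffv : ∀ ζ : ℝ, 0 < ζ → HasDerivAt v (deriv v ζ) ζ := by
    intro ζ hζ
    have := (h2.differentiableOn (by norm_num)) ζ hζ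
    exact (this.differentiableAt (Ioi_mem_nhds hζ)).hasDerivAt
  have h2' : ContDiffOn ℝ 1 (deriv v) (Ioi 0) := by
    have := (contDiffOn_succ_iff_deriv_of_isOpen (n := 1) isOpen_Ioi).mp
      (by rw [show ((1 : WithTop ℕ∞) + 1) = 2 by norm_num]; exact h2)
    exact this.2.2
  have hdd : ∀ ζ : ℝ, 0 < ζ → HasDerivAt (deriv v) (deriv (deriv v) ζ) ζ := by
    intro ζ hζ
    have := (h2'.differentiableOn (by norm_num)) ζ hζ
    exact (this.differentiableAt (Ioi_mem_nhds hζ)).hasDerivAt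
  set q : ℝ → ℝ := fun t => G t * V t with hq
  have hqc : Continuous q := hG.mul hVc
  have hqv : ∀ t : ℝ, 0 < t → q t = G t * v t := fun t ht => by
    rw [hq]; simp only [hVeq t ht.le]
  set Fq : ℝ → ℝ := FF a G V with hFq
  have hFqc : Continuous Fq := FF_cont ha0 hG hVc
  -- derivative of Φ
  have hΦd : ∀ s : ℝ, 0 < s → HasDerivAt (fun s => s ^ a * deriv v s)
      (s ^ (a - 1) * q s) s := by
    intro s hs
    have hr : HasDerivAt (fun x : ℝ => x ^ a) (a * s ^ (a - 1)) s :=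
      Real.hasDerivAt_rpow_const (Or.inl hs.ne')
    have := hr.mul (hdd s hs)
    refine this.congr_deriv ?_
    have hsa : s ^ a = s ^ (a - 1) * s := by
      rw [← Real.rpow_add_one hs.ne' (a - 1)]; ring_nf
    have hods := hode s hs
    rw [hqv s hs, ← hods, hsa]
    ring
  -- Φ ζ = Fq ζ for ζ > 0
  have hΦ : ∀ ζ : ℝ, 0 < ζ → ζ ^ a * deriv v ζ = Fq ζ := by
    intro ζ hζ
    have hint : ∀ ε : ℝ, ε ∈ Ioo 0 ζ →
        ζ ^ a * deriv v ζ = ε ^ a * deriv v ε + Fq ζ - Fq ε := by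
      intro ε hε
      have hεζ : ε ≤ ζ := hε.2.le
      have hcont : ContinuousOn (fun s : ℝ => s ^ (a - 1) * q s) (uIcc ε ζ) := by
        rw [uIcc_of_le hεζ]
        refine ((contOn_rpow.mono ?_).mul hqc.continuousOn)
        intro x hx
        exact lt_of_lt_of_le hε.1 hx.1
      have hft := intervalIntegral.integral_eq_sub_of_hasDerivAt
        (f := fun s => s ^ a * deriv v s) (f' := fun s => s ^ (a - 1) * q s)
        (fun x hx => hΦd x (lt_of_lt_of_le hε.1 ((uIcc_of_le hεζ ▸ hx).1)))
        hcont.intervalIntegrable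
      have hadj : (∫ t in (0:ℝ)..ε, t ^ (a - 1) * q t) + ∫ t in ε..ζ, t ^ (a - 1) * q t
          = ∫ t in (0:ℝ)..ζ, t ^ (a - 1) * q t :=
        intervalIntegral.integral_add_adjacent_intervals
          (primII (by linarith) hqc hε.1.le) hcont.intervalIntegrable
      have hFqζ : Fq ζ = ∫ t in (0:ℝ)..ζ, t ^ (a - 1) * q t := prim_eq hζ.le
      have hFqε : Fq ε = ∫ t in (0:ℝ)..ε, t ^ (a - 1) * q t := prim_eq hε.1.le
      have hft' : (∫ t in ε..ζ, t ^ (a - 1) * q t)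
          = ζ ^ a * deriv v ζ - ε ^ a * deriv v ε := by simpa using hft
      rw [hFqζ, hFqε]
      linarith [hft', hadj]
    -- limits
    have hvd := h1.continuousOn_derivWithin (uniqueDiffOn_Ici 0) le_rfl
    have hvd0 : Tendsto (derivWithin v (Ici 0)) (𝓝[>] (0:ℝ))
        (𝓝 (derivWithin v (Ici 0) 0)) := by
      have := (hvd 0 self_mem_Ici).tendsto
      exact this.mono_left (nhdsWithin_mono 0 Ioi_subset_Ici_self)
    have hpow0 : Tendsto (fun ε : ℝ => ε ^ a) (𝓝[>] (0:ℝ)) (𝓝 0) := by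
      have hc : ContinuousAt (fun x : ℝ => x ^ a) 0 :=
        Real.continuousAt_rpow_const 0 a (Or.inr ha0.le)
      have := hc.continuousWithinAt (s := Ioi 0)
      rwa [ContinuousWithinAt, Real.zero_rpow ha0.ne'] at this
    have hΦ0 : Tendsto (fun ε : ℝ => ε ^ a * deriv v ε) (𝓝[>] (0:ℝ)) (𝓝 0) := by
      have heq : ∀ᶠ ε in 𝓝[>] (0:ℝ), ε ^ a * derivWithin v (Ici 0) ε
          = ε ^ a * deriv v ε := by
        filter_upwards [self_mem_nhdsWithin] with ε hε
        rw [derivWithin_of_mem_nhds (Ici_mem_nhds hε)]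
      have h0 := hpow0.mul hvd0
      rw [zero_mul] at h0
      exact h0.congr' heq
    have hFq0 : Tendsto Fq (𝓝[>] (0:ℝ)) (𝓝 0) := by
      have := hFqc.continuousAt (x := 0)
      rw [ContinuousAt] at this
      have h0 : Fq 0 = 0 := prim_nonpos le_rfl
      rw [h0] at this
      exact this.mono_left nhdsWithin_le_nhds
    have hrhs : Tendsto (fun ε : ℝ => ε ^ a * deriv v ε + Fq ζ - Fq ε) (𝓝[>] (0:ℝ))
        (𝓝 (Fq ζ)) := by
      have := (hΦ0.add_const (Fq ζ)).sub hFq0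
      simpa using this
    have hlhs : Tendsto (fun _ : ℝ => ζ ^ a * deriv v ζ) (𝓝[>] (0:ℝ))
        (𝓝 (ζ ^ a * deriv v ζ)) := tendsto_const_nhds
    have hcongr : Tendsto (fun ε : ℝ => ζ ^ a * deriv v ζ) (𝓝[>] (0:ℝ)) (𝓝 (Fq ζ)) := by
      refine hrhs.congr' ?_
      filter_upwards [Ioo_mem_nhdsGT_of_mem ⟨le_rfl, hζ⟩] with ε hε
      exact (hint ε hε).symm
    exact tendsto_nhds_unique hlhs hcongr
  have hderiv_eq : ∀ ζ : ℝ, 0 < ζ → deriv v ζ = psi a G V ζ := by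
    intro ζ hζ
    have h := hΦ ζ hζ
    have hpow : ζ ^ (-a) * ζ ^ a = 1 := by
      rw [← Real.rpow_add hζ]; simp
    unfold psi
    rw [← hFq, ← h]
    calc deriv v ζ = (ζ ^ (-a) * ζ ^ a) * deriv v ζ := by rw [hpow]; ring
      _ = ζ ^ (-a) * (ζ ^ a * deriv v ζ) := by ring
  -- FTC from 0
  refine ⟨hVc, ?_, hderiv_eq⟩
  intro ζ
  rcases lt_or_ge ζ 0 with hζ | hζ
  · have hTT : TT a G V ζ = 0 := prim_nonpos hζ.le
    show V ζ = 1 + TT a G V ζ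
    rw [hTT, hVdef]
    simp only [max_eq_right hζ.le, hv0]
    ring
  · show V ζ = 1 + TT a G V ζ
    have hder : ∀ x ∈ Ioo (0:ℝ) ζ, HasDerivWithinAt v (psi a G V x) (Ioi x) x := by
      intro x hx
      have h := (hdiffv x hx.1).hasDerivWithinAt (s := Ioi x)
      rwa [hderiv_eq x hx.1] at h
    have hintg : IntervalIntegrable (psi a G V) volume 0 ζ := by
      have := primII (β := -a) (by linarith) hFqc hζ
      exact this
    have hFTC := intervalIntegral.integral_eq_sub_of_hasDeriv_right_of_le hζ
      (f := v) (f' := psi a G V)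
      (h1.continuousOn.mono (Icc_subset_Ici_self)) hder hintg
    have hTT : TT a G V ζ = ∫ s in (0:ℝ)..ζ, s ^ (-a) * FF a G V s := prim_eq hζ
    rw [hVeq ζ hζ]
    simp only [psi] at hFTC
    rw [hTT, hv0] at *
    linarith [hFTC]

end Conv

end Op


end S6

open Filter Set

/-- A regular solution of the singular ODE
`-ζ·v'' - v'/(m-2) + B·ζ^{m/(m-2)}·v = σ·v` on `(0,∞)`:
continuously differentiable on `[0,∞)`, twice continuously differentiable on
`(0,∞)`, and normalized by `v 0 = 1`. -/
def RegSol (m B σ : ℝ) (v : ℝ → ℝ) : Prop :=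
  ContDiffOn ℝ 1 v (Set.Ici 0) ∧
  ContDiffOn ℝ 2 v (Set.Ioi 0) ∧
  (∀ ζ : ℝ, 0 < ζ →
    -ζ * deriv (deriv v) ζ - deriv v ζ / (m - 2)
      + B * ζ ^ (m / (m - 2)) * v ζ = σ * v ζ) ∧
  v 0 = 1
theorem stmt6 (m B : ℝ) (hm : 3 < m) (hB : 0 < B) (σ : ℝ) :
    (∃ v : ℝ → ℝ, RegSol m B σ v) ∧
    (∀ v w : ℝ → ℝ, RegSol m B σ v → RegSol m B σ w →
      Set.EqOn v w (Set.Ici 0)) ∧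
    (∀ v : ℝ → ℝ, RegSol m B σ v →
      derivWithin v (Set.Ici 0) 0 = -(m - 2) * σ) := by
  have hm2 : (1:ℝ) < m - 2 := by linarith
  have hm2' : (0:ℝ) < m - 2 := by linarith
  set a : ℝ := (m - 2)⁻¹ with ha_def
  have ha0 : 0 < a := inv_pos.2 hm2'
  have ha1 : a < 1 := by
    rw [ha_def]
    rw [inv_lt_one_iff₀]
    right; exact hm2
  set p : ℝ := m / (m - 2) with hp_def
  have hp0 : 0 < p := div_pos (by linarith) hm2'
  set G : ℝ → ℝ := fun t => B * t ^ p - σ with hG_def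
  have hGc : Continuous G := by
    apply Continuous.sub ?_ continuous_const
    apply continuous_const.mul
    rw [continuous_iff_continuousAt]
    intro x
    exact Real.continuousAt_rpow_const x p (Or.inr hp0.le)
  have hG0 : G 0 = -σ := by
    rw [hG_def]
    simp [Real.zero_rpow hp0.ne']
  have hdiv : ∀ x : ℝ, x / (m - 2) = a * x := by
    intro x; rw [ha_def, div_eq_mul_inv, mul_comm]
  -- conversion of the ODE
  have hode_conv : ∀ v : ℝ → ℝ, (∀ ζ : ℝ, 0 < ζ →
      -ζ * deriv (deriv v) ζ - deriv v ζ / (m - 2)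
        + B * ζ ^ (m / (m - 2)) * v ζ = σ * v ζ) →
      (∀ ζ : ℝ, 0 < ζ → ζ * deriv (deriv v) ζ + a * deriv v ζ = G ζ * v ζ) := by
    intro v hode ζ hζ
    have h := hode ζ hζ
    rw [hdiv] at h
    show ζ * _ + a * _ = (B * ζ ^ p - σ) * v ζ
    rw [hp_def]
    linarith
  refine ⟨?_, ?_, ?_⟩
  · -- existence
    set V : ℝ → ℝ := S6.vv a G with hV_def
    have hVc : Continuous V := S6.vv_cont ha0 ha1 hGc
    have hfix : ∀ ζ, V ζ = 1 + S6.TT a G V ζ := S6.vv_fixed ha0 ha1 hGc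
    refine ⟨V, ?_, ?_, ?_, ?_⟩
    · exact S6.V_contDiffOn_one ha0 ha1 hGc hVc hfix
    · exact S6.V_contDiffOn_two ha0 ha1 hGc hVc hfix
    · intro ζ hζ
      rw [S6.V_deriv2_eq ha0 ha1 hGc hVc hfix hζ, S6.V_deriv_eq ha0 ha1 hGc hVc hfix hζ]
      rw [hdiv]
      unfold S6.psi S6.psi'
      have key1 : ζ * ζ ^ (-a - 1) = ζ ^ (-a) := by
        rw [mul_comm, ← Real.rpow_add_one hζ.ne' (-a - 1)]
        norm_num
      have key2 : ζ * (ζ ^ (-a) * ζ ^ (a - 1)) = 1 := by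
        rw [← Real.rpow_add hζ, mul_comm, ← Real.rpow_add_one hζ.ne']
        rw [show -a + (a - 1) + 1 = 0 by ring, Real.rpow_zero]
      have hGζ : G ζ = B * ζ ^ p - σ := rfl
      rw [← hp_def]
      set F := S6.FF a G V ζ
      set W := V ζ
      linear_combination (a * F) * key1 - (G ζ * W) * key2
        + W * hGζ
    · exact S6.vv_nonpos le_rfl
  · -- uniqueness
    intro v w hv hw
    obtain ⟨hv1, hv2, hv3, hv4⟩ := hv
    obtain ⟨hw1, hw2, hw3, hw4⟩ := hw
    obtain ⟨hVc, hVfix, _⟩ := S6.regsol_fixed ha0 ha1 hGc hv1 hv2 (hode_conv v hv3) hv4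
    obtain ⟨hWc, hWfix, _⟩ := S6.regsol_fixed ha0 ha1 hGc hw1 hw2 (hode_conv w hw3) hw4
    set V : ℝ → ℝ := fun x => v (max x 0) with hV_def
    set W : ℝ → ℝ := fun x => w (max x 0) with hW_def
    have hd : Continuous (fun x => V x - W x) := hVc.sub hWc
    have hdfix : ∀ ζ, V ζ - W ζ = S6.TT a G (fun x => V x - W x) ζ := by
      intro ζ
      rw [S6.TT_sub ha0 ha1 hGc hVc hWc]
      show v (max ζ 0) - w (max ζ 0) = _
      linarith [hVfix ζ, hWfix ζ]
    have hzero := S6.TT_fixed_zero ha0 ha1 hGc hd hdfix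
    intro ζ hζ
    have h := hzero ζ hζ
    have hVv : V ζ = v ζ := by rw [hV_def]; simp [max_eq_left (mem_Ici.mp hζ)]
    have hWw : W ζ = w ζ := by rw [hW_def]; simp [max_eq_left (mem_Ici.mp hζ)]
    rw [hVv, hWw] at h
    linarith
  · -- derivative at 0
    intro v hv
    obtain ⟨hv1, hv2, hv3, hv4⟩ := hv
    obtain ⟨hVc, hVfix, _⟩ := S6.regsol_fixed ha0 ha1 hGc hv1 hv2 (hode_conv v hv3) hv4
    set V : ℝ → ℝ := fun x => v (max x 0) with hV_def
    have heqOn : Set.EqOn v V (Set.Ici 0) := by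
      intro x hx
      rw [hV_def]
      simp [max_eq_left (mem_Ici.mp hx)]
    have h1 : derivWithin v (Set.Ici 0) 0 = derivWithin V (Set.Ici 0) 0 :=
      derivWithin_congr heqOn (heqOn self_mem_Ici)
    rw [h1, S6.V_derivWithin_eqOn ha0 ha1 hGc hVc hVfix self_mem_Ici]
    have hV0 : V 0 = 1 := by rw [hV_def]; simpa using hv4
    simp only [S6.PSI, if_pos le_rfl, hG0, hV0]
    rw [ha_def]
    field_simp
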